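/- Let ρ₀ ≥ 0, σ₀ ≥ 0 and l > 0, and suppose that for every continuously differentiable function ξ : [0, l] → ℝ with ξ(0) = 0 one has (ρ₀/2) ∫₀^l ξ(t)² dt + σ₀ ξ(l)² ≤ (4/3) ∫₀^l ξ'(t)² dt. Then: (i) if σ₀ > 0, then l ≤ 4/(3σ₀); and (ii) if ρ₀ > 0, then l ≤ 2√2 π/√(3 ρ₀). -/

import Mathlib

/-- **Length bound from a one-dimensional stability-type inequality.**
Let `ρ₀, σ₀ ≥ 0` and `l > 0`, and suppose that every `C¹` function `ξ` with `ξ(0) = 0`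
satisfies `(ρ₀/2) ∫₀^l ξ² + σ₀ ξ(l)² ≤ (4/3) ∫₀^l (ξ')²`. Then `l ≤ 4/(3σ₀)` if `σ₀ > 0`,
and `l ≤ 2√2 π/√(3ρ₀)` if `ρ₀ > 0`. -/
theorem length_bound_of_stability_inequality
    (ρ₀ σ₀ l : ℝ) (hρ₀ : 0 ≤ ρ₀) (hσ₀ : 0 ≤ σ₀) (hl : 0 < l)
    (hineq : ∀ ξ : ℝ → ℝ, ContDiff ℝ 1 ξ → ξ 0 = 0 →
      ρ₀ / 2 * (∫ t in (0:ℝ)..l, ξ t ^ 2) + σ₀ * ξ l ^ 2 ≤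
        4 / 3 * ∫ t in (0:ℝ)..l, (deriv ξ t) ^ 2) :
    (0 < σ₀ → l ≤ 4 / (3 * σ₀)) ∧
      (0 < ρ₀ → l ≤ 2 * Real.sqrt 2 * Real.pi / Real.sqrt (3 * ρ₀)) := by
  constructor
  · -- boundary term: use ξ t = t
    intro hσ
    have h1 := hineq (fun t => t) contDiff_id rfl
    have hd : deriv (fun t : ℝ => t) = fun _ => (1 : ℝ) := by
      funext t; simp
    rw [hd] at h1
    have hi1 : (∫ t in (0:ℝ)..l, (t : ℝ) ^ 2) = l ^ 3 / 3 := by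
      rw [integral_pow]; norm_num
    have hi2 : (∫ _t in (0:ℝ)..l, (1 : ℝ) ^ 2) = l := by
      simp
    rw [hi1, hi2] at h1
    rw [le_div_iff₀ (by positivity)]
    nlinarith [mul_nonneg hρ₀ (pow_pos hl 3).le]
  · -- interior term: use ξ t = 2*l*t - t^2
    intro hρ
    set ξ : ℝ → ℝ := fun t => 2 * l * t - t ^ 2 with hξdef
    have hξd : ∀ t : ℝ, HasDerivAt ξ (2 * l - 2 * t) t := by
      intro t
      have H := ((hasDerivAt_id t).const_mul (2 * l)).sub (hasDerivAt_pow 2 t)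
      exact H.congr_deriv (by push_cast; ring)
    have hderiv : deriv ξ = fun t => 2 * l - 2 * t := funext fun t => (hξd t).deriv
    have hc : ContDiff ℝ 1 ξ := by
      apply ContDiff.sub
      · exact contDiff_const.mul contDiff_id
      · exact contDiff_id.pow 2
    have h0 : ξ 0 = 0 := by simp [hξdef]
    have h1 := hineq ξ hc h0
    rw [hderiv] at h1
    have hi1 : (∫ t in (0:ℝ)..l, ξ t ^ 2) = 8 * l ^ 5 / 15 := by
      have hF : ∀ t ∈ Set.uIcc (0:ℝ) l,
          HasDerivAt (fun t : ℝ => 4 * l ^ 2 / 3 * t ^ 3 - l * t ^ 4 + 5⁻¹ * t ^ 5)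
            (ξ t ^ 2) t := by
        intro t _
        have H := (((hasDerivAt_pow 3 t).const_mul (4 * l ^ 2 / 3)).sub
          ((hasDerivAt_pow 4 t).const_mul l)).add ((hasDerivAt_pow 5 t).const_mul 5⁻¹)
        exact H.congr_deriv (by simp only [hξdef]; push_cast; ring)
      have hint : IntervalIntegrable (fun t => ξ t ^ 2) MeasureTheory.volume 0 l := by
        apply Continuous.intervalIntegrable
        simp only [hξdef]; continuity
      rw [intervalIntegral.integral_eq_sub_of_hasDerivAt hF hint]
      ring
    have hi2 : (∫ t in (0:ℝ)..l, (2 * l - 2 * t) ^ 2) = 4 * l ^ 3 / 3 := by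
      have hF : ∀ t ∈ Set.uIcc (0:ℝ) l,
          HasDerivAt (fun t : ℝ => 4 * l ^ 2 * t - 4 * l * t ^ 2 + 4 / 3 * t ^ 3)
            ((2 * l - 2 * t) ^ 2) t := by
        intro t _
        have H := (((hasDerivAt_id t).const_mul (4 * l ^ 2)).sub
          ((hasDerivAt_pow 2 t).const_mul (4 * l))).add ((hasDerivAt_pow 3 t).const_mul (4 / 3))
        exact H.congr_deriv (by push_cast; ring)
      have hint : IntervalIntegrable (fun t => (2 * l - 2 * t) ^ 2) MeasureTheory.volume 0 l := by
        apply Continuous.intervalIntegrable; continuity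
      rw [intervalIntegral.integral_eq_sub_of_hasDerivAt hF hint]
      ring
    rw [hi1, hi2] at h1
    have hξl : ξ l = l ^ 2 := by simp [hξdef]; ring
    rw [hξl] at h1
    -- from h1 : ρ₀/2 * (8*l^5/15) + σ₀ * (l^2)^2 ≤ 4/3 * (4*l^3/3)
    have key : ρ₀ * l ^ 2 ≤ 20 / 3 := by
      nlinarith [mul_nonneg hσ₀ (pow_pos hl 2).le, pow_pos hl 3, pow_pos hl 5,
        mul_pos (pow_pos hl 3) hρ]
    have h3ρ : (0:ℝ) < 3 * ρ₀ := by linarith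
    rw [le_div_iff₀ (Real.sqrt_pos.2 h3ρ)]
    have hnn : 0 ≤ l * Real.sqrt (3 * ρ₀) :=
      mul_nonneg hl.le (Real.sqrt_nonneg _)
    have hsq : (l * Real.sqrt (3 * ρ₀)) ^ 2 ≤ (2 * Real.sqrt 2 * Real.pi) ^ 2 := by
      have e1 : (l * Real.sqrt (3 * ρ₀)) ^ 2 = l ^ 2 * (3 * ρ₀) := by
        rw [mul_pow, Real.sq_sqrt h3ρ.le]
      have e2 : (2 * Real.sqrt 2 * Real.pi) ^ 2 = 8 * Real.pi ^ 2 := by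
        rw [mul_pow, mul_pow, Real.sq_sqrt (by norm_num : (0:ℝ) ≤ 2)]
        ring
      rw [e1, e2]
      nlinarith [Real.pi_gt_three]
    calc l * Real.sqrt (3 * ρ₀) = Real.sqrt ((l * Real.sqrt (3 * ρ₀)) ^ 2) :=
          (Real.sqrt_sq hnn).symm
      _ ≤ Real.sqrt ((2 * Real.sqrt 2 * Real.pi) ^ 2) := Real.sqrt_le_sqrt hsq
      _ = 2 * Real.sqrt 2 * Real.pi := Real.sqrt_sq (by positivity)
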